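/- arXiv:1912.11382 — 3 statements merged into one kernel-verified Lean document; each statement's English description precedes it below -/
import Mathlib

section
/- Under the hypotheses of the previous error decomposition, suppose additionally that (with respect to the operator norm ‖·‖ and its supremum over s ∈ S) ‖H_i - Ĥ_i‖_∞ ≤ ε_i for i = 1,2,3,4, that f₁ := sup_s ‖D (I + D Ĥ₃(s) D)⁻¹ D Ĥ₄(s)‖ < ∞ and f₂ := sup_s ‖H₂(s) D (I + D H₃(s) D)⁻¹ D‖ < ∞. Then sup_{s∈S} ‖H(s) - Ĥ(s)‖ ≤ ε₁ + f₁ ε₂ + f₁ f₂ ε₃ + f₂ ε₄. -/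
open Matrix
open scoped Matrix.Norms.L2Operator

/-- Purely algebraic decomposition with the inverses replaced by opaque matrices. -/
private lemma key_decomp {ℓ m k : ℕ}
    (P₁ Q₁ : Matrix (Fin ℓ) (Fin m) ℂ)
    (P₂ Q₂ : Matrix (Fin ℓ) (Fin k) ℂ)
    (P₃ Q₃ u v D : Matrix (Fin k) (Fin k) ℂ)
    (P₄ Q₄ : Matrix (Fin k) (Fin m) ℂ)
    (hduv : u - v = u * (D * (Q₃ - P₃) * D) * v) :
    (P₁ - P₂ * D * u * D * P₄) - (Q₁ - Q₂ * D * v * D * Q₄)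
      = (P₁ - Q₁) - (P₂ - Q₂) * (D * v * D * Q₄)
        - (P₂ * D * u * D) * (Q₃ - P₃) * (D * v * D * Q₄)
        - (P₂ * D * u * D) * (P₄ - Q₄) := by
  have h3 : (P₂ * D * u * D) * (Q₃ - P₃) * (D * v * D * Q₄)
      = P₂ * D * (u - v) * D * Q₄ := by
    rw [hduv]; simp only [Matrix.mul_assoc]
  rw [h3]
  simp only [Matrix.mul_sub, Matrix.sub_mul, Matrix.mul_assoc]
  abel

theorem error_bound_subsystem_reduction
    {S : Type*} (ℓ m k : ℕ)
    (H₁ Hh₁ : S → Matrix (Fin ℓ) (Fin m) ℂ)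
    (H₂ Hh₂ : S → Matrix (Fin ℓ) (Fin k) ℂ)
    (H₃ Hh₃ : S → Matrix (Fin k) (Fin k) ℂ)
    (H₄ Hh₄ : S → Matrix (Fin k) (Fin m) ℂ)
    (d : Fin k → ℝ) (hd : ∀ i, d i ≠ 0)
    (D : Matrix (Fin k) (Fin k) ℂ)
    (hD : D = Matrix.diagonal fun i => (d i : ℂ))
    (hinv : ∀ s : S, IsUnit ((1 : Matrix (Fin k) (Fin k) ℂ) + D * H₃ s * D))
    (hinv' : ∀ s : S, IsUnit ((1 : Matrix (Fin k) (Fin k) ℂ) + D * Hh₃ s * D))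
    (H Hh : S → Matrix (Fin ℓ) (Fin m) ℂ)
    (hH : ∀ s : S, H s = H₁ s -
      H₂ s * D * ((1 : Matrix (Fin k) (Fin k) ℂ) + D * H₃ s * D)⁻¹ * D * H₄ s)
    (hHh : ∀ s : S, Hh s = Hh₁ s -
      Hh₂ s * D * ((1 : Matrix (Fin k) (Fin k) ℂ) + D * Hh₃ s * D)⁻¹ * D * Hh₄ s)
    (ε₁ ε₂ ε₃ ε₄ f₁ f₂ : ℝ)
    (he₁ : ∀ s : S, ‖H₁ s - Hh₁ s‖ ≤ ε₁)
    (he₂ : ∀ s : S, ‖H₂ s - Hh₂ s‖ ≤ ε₂)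
    (he₃ : ∀ s : S, ‖H₃ s - Hh₃ s‖ ≤ ε₃)
    (he₄ : ∀ s : S, ‖H₄ s - Hh₄ s‖ ≤ ε₄)
    (hf₁ : ∀ s : S,
      ‖D * ((1 : Matrix (Fin k) (Fin k) ℂ) + D * Hh₃ s * D)⁻¹ * D * Hh₄ s‖ ≤ f₁)
    (hf₂ : ∀ s : S,
      ‖H₂ s * D * ((1 : Matrix (Fin k) (Fin k) ℂ) + D * H₃ s * D)⁻¹ * D‖ ≤ f₂) :
    ∀ s : S, ‖H s - Hh s‖ ≤ ε₁ + f₁ * ε₂ + f₁ * f₂ * ε₃ + f₂ * ε₄ := by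
  intro s
  obtain ⟨u, hu, hM⟩ :
      ∃ u : Matrix (Fin k) (Fin k) ℂ,
        u * ((1 : Matrix (Fin k) (Fin k) ℂ) + D * H₃ s * D) = 1 ∧
        u = ((1 : Matrix (Fin k) (Fin k) ℂ) + D * H₃ s * D)⁻¹ :=
    ⟨_, Matrix.nonsing_inv_mul _ ((Matrix.isUnit_iff_isUnit_det _).mp (hinv s)), rfl⟩
  obtain ⟨v, hv, hN⟩ :
      ∃ v : Matrix (Fin k) (Fin k) ℂ,
        ((1 : Matrix (Fin k) (Fin k) ℂ) + D * Hh₃ s * D) * v = 1 ∧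
        v = ((1 : Matrix (Fin k) (Fin k) ℂ) + D * Hh₃ s * D)⁻¹ :=
    ⟨_, Matrix.mul_nonsing_inv _ ((Matrix.isUnit_iff_isUnit_det _).mp (hinv' s)), rfl⟩
  have hduv : u - v = u * (D * (Hh₃ s - H₃ s) * D) * v := by
    calc u - v
        = u * (((1 : Matrix (Fin k) (Fin k) ℂ) + D * Hh₃ s * D) * v)
          - (u * ((1 : Matrix (Fin k) (Fin k) ℂ) + D * H₃ s * D)) * v := by
            rw [hu, hv, Matrix.mul_one, Matrix.one_mul]
      _ = u * (D * (Hh₃ s - H₃ s) * D) * v := by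
            simp only [Matrix.mul_sub, Matrix.sub_mul, Matrix.mul_add, Matrix.add_mul,
              Matrix.mul_assoc]
            abel
  have key : H s - Hh s
      = (H₁ s - Hh₁ s) - (H₂ s - Hh₂ s) * (D * v * D * Hh₄ s)
        - (H₂ s * D * u * D) * (Hh₃ s - H₃ s) * (D * v * D * Hh₄ s)
        - (H₂ s * D * u * D) * (H₄ s - Hh₄ s) := by
    rw [hH s, hHh s, ← hM, ← hN]
    exact key_decomp _ _ _ _ _ _ _ _ _ _ _ hduv
  have hε₂ : (0:ℝ) ≤ ε₂ := le_trans (norm_nonneg _) (he₂ s)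
  have hε₃ : (0:ℝ) ≤ ε₃ := le_trans (norm_nonneg _) (he₃ s)
  have hf₁0 : (0:ℝ) ≤ f₁ := le_trans (norm_nonneg _) (hf₁ s)
  have hf₂0 : (0:ℝ) ≤ f₂ := le_trans (norm_nonneg _) (hf₂ s)
  have hBn : ‖D * v * D * Hh₄ s‖ ≤ f₁ := by rw [hN]; exact hf₁ s
  have hAn : ‖H₂ s * D * u * D‖ ≤ f₂ := by rw [hM]; exact hf₂ s
  have b2 : ‖(H₂ s - Hh₂ s) * (D * v * D * Hh₄ s)‖ ≤ f₁ * ε₂ := by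
    calc ‖(H₂ s - Hh₂ s) * (D * v * D * Hh₄ s)‖
        ≤ ‖H₂ s - Hh₂ s‖ * ‖D * v * D * Hh₄ s‖ := Matrix.l2_opNorm_mul _ _
      _ ≤ ε₂ * f₁ := mul_le_mul (he₂ s) hBn (norm_nonneg _) hε₂
      _ = f₁ * ε₂ := mul_comm _ _
  have b3 : ‖(H₂ s * D * u * D) * (Hh₃ s - H₃ s) * (D * v * D * Hh₄ s)‖
      ≤ f₁ * f₂ * ε₃ := by
    have h1 : ‖H₂ s * D * u * D * (Hh₃ s - H₃ s)‖ ≤ f₂ * ε₃ := by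
      calc ‖H₂ s * D * u * D * (Hh₃ s - H₃ s)‖
          ≤ ‖H₂ s * D * u * D‖ * ‖Hh₃ s - H₃ s‖ := Matrix.l2_opNorm_mul _ _
        _ ≤ f₂ * ε₃ := by
            rw [norm_sub_rev]
            exact mul_le_mul hAn (he₃ s) (norm_nonneg _) hf₂0
    calc ‖(H₂ s * D * u * D) * (Hh₃ s - H₃ s) * (D * v * D * Hh₄ s)‖
        ≤ ‖H₂ s * D * u * D * (Hh₃ s - H₃ s)‖ * ‖D * v * D * Hh₄ s‖ :=
          Matrix.l2_opNorm_mul _ _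
      _ ≤ (f₂ * ε₃) * f₁ :=
          mul_le_mul h1 hBn (norm_nonneg _) (mul_nonneg hf₂0 hε₃)
      _ = f₁ * f₂ * ε₃ := by ring
  have b4 : ‖(H₂ s * D * u * D) * (H₄ s - Hh₄ s)‖ ≤ f₂ * ε₄ := by
    calc ‖(H₂ s * D * u * D) * (H₄ s - Hh₄ s)‖
        ≤ ‖H₂ s * D * u * D‖ * ‖H₄ s - Hh₄ s‖ := Matrix.l2_opNorm_mul _ _
      _ ≤ f₂ * ε₄ := mul_le_mul hAn (he₄ s) (norm_nonneg _) hf₂0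
  have step : ‖H s - Hh s‖
      ≤ ‖H₁ s - Hh₁ s‖ + ‖(H₂ s - Hh₂ s) * (D * v * D * Hh₄ s)‖
        + ‖(H₂ s * D * u * D) * (Hh₃ s - H₃ s) * (D * v * D * Hh₄ s)‖
        + ‖(H₂ s * D * u * D) * (H₄ s - Hh₄ s)‖ := by
    rw [key]
    calc ‖_ - _ - _ - _‖ ≤ ‖_ - _ - _‖ + ‖_‖ := norm_sub_le _ _
      _ ≤ (‖_ - _‖ + ‖_‖) + ‖_‖ := by gcongr; exact norm_sub_le _ _
      _ ≤ ((‖_‖ + ‖_‖) + ‖_‖) + ‖_‖ := by gcongr; exact norm_sub_le _ _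
  linarith [he₁ s, b2, b3, b4, step]
end

section
/- Let M ∈ ℂ^{k×k} satisfy Re⟨x, Mx⟩ ≥ 0 for all x ∈ ℂ^k (i.e., M + M* is positive semidefinite), and let D ∈ ℝ^{k×k} be any real diagonal matrix. Then I + D M D is invertible. -/
open Matrix
open scoped ComplexOrder

theorem dissipative_feedback_invertible
    (k : ℕ) (M : Matrix (Fin k) (Fin k) ℂ)
    (hM : (M + Mᴴ).PosSemidef)
    (d : Fin k → ℝ)
    (D : Matrix (Fin k) (Fin k) ℂ)
    (hD : D = Matrix.diagonal fun i => (d i : ℂ)) :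
    IsUnit ((1 : Matrix (Fin k) (Fin k) ℂ) + D * M * D) := by
  rw [Matrix.isUnit_iff_isUnit_det, isUnit_iff_ne_zero]
  intro hdet
  obtain ⟨v, hvne, hvz⟩ := Matrix.exists_mulVec_eq_zero_iff.2 hdet
  have hDH : Dᴴ = D := by
    simp [hD, Matrix.diagonal_conjTranspose, Function.comp_def]
  set y : Fin k → ℂ := D *ᵥ v with hy
  have hstar_y : star y = star v ᵥ* D := by
    rw [hy, Matrix.star_mulVec, hDH]
  -- the equation v + D M D v = 0
  have heq : v + (D * M * D) *ᵥ v = 0 := by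
    rwa [Matrix.add_mulVec, Matrix.one_mulVec] at hvz
  -- dot with star v
  have hdot : star v ⬝ᵥ v + star y ⬝ᵥ (M *ᵥ y) = 0 := by
    have h1 : star y ⬝ᵥ (M *ᵥ y) = star v ⬝ᵥ ((D * M * D) *ᵥ v) := by
      rw [hstar_y, ← Matrix.dotProduct_mulVec, hy, ← Matrix.mulVec_mulVec, ← Matrix.mulVec_mulVec]
    rw [h1, ← dotProduct_add, heq]
    simp
  set c : ℂ := star y ⬝ᵥ (M *ᵥ y) with hc
  -- M^H part
  have hMH : star y ⬝ᵥ (Mᴴ *ᵥ y) = star c := by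
    rw [hc, Matrix.star_dotProduct]
    congr 1
    rw [Matrix.star_mulVec, conjTranspose_conjTranspose, ← Matrix.dotProduct_mulVec]
  have hpos : (0 : ℂ) ≤ c + star c := by
    have := hM.dotProduct_mulVec_nonneg y
    rwa [Matrix.add_mulVec, dotProduct_add, ← hc, hMH] at this
  have hvv : (0 : ℂ) < star v ⬝ᵥ v := Matrix.dotProduct_star_self_pos_iff.2 hvne
  have hvv_star : star (star v ⬝ᵥ v) = star v ⬝ᵥ v :=
    (Matrix.star_dotProduct v v).symm
  have hdot2 : star v ⬝ᵥ v + star c = 0 := by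
    have := congrArg star hdot
    simpa [hvv_star] using this
  have hsum : (star v ⬝ᵥ v) + (star v ⬝ᵥ v) + (c + star c) = 0 := by
    linear_combination hdot + hdot2
  have hlt : (0 : ℂ) < (star v ⬝ᵥ v) + (star v ⬝ᵥ v) + (c + star c) := by
    have h2 : (0 : ℂ) < (star v ⬝ᵥ v) + (star v ⬝ᵥ v) := by positivity
    calc (0 : ℂ) < (star v ⬝ᵥ v) + (star v ⬝ᵥ v) := h2
      _ ≤ _ := le_add_of_nonneg_right hpos
  rw [hsum] at hlt
  exact lt_irrefl 0 hlt
end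

section
/- Consider the second-order system matrices M, K ∈ ℝ^{n×n} symmetric positive definite, D ∈ ℝ^{n×n} symmetric positive semidefinite, and U₂ ∈ ℝ^{n×k}. For every s ∈ ℂ with Re(s) ≥ 0, s ≠ 0, such that s²M + sD + K is invertible, the matrix H₃(s) = s U₂ᵀ (s²M + sD + K)⁻¹ U₂ satisfies H₃(s) + H₃(s)* ≥ 0 (positive semidefinite Hermitian part). -/
open Matrix
open scoped ComplexOrder

private lemma ofReal_semiconj : Function.Semiconj (Complex.ofReal) star star := by
  intro a; simp [Complex.conj_ofReal]

open scoped MatrixOrder in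
private lemma psd_map_ofReal {n : ℕ} {A : Matrix (Fin n) (Fin n) ℝ} (hA : A.PosSemidef) :
    (A.map Complex.ofReal).PosSemidef := by
  have hsq : (CFC.sqrt A).map Complex.ofReal * (CFC.sqrt A).map Complex.ofReal = A.map Complex.ofReal := by
    rw [show (Complex.ofReal : ℝ → ℂ) = ⇑(Complex.ofRealHom : ℝ →+* ℂ) from rfl,
      ← Matrix.map_mul, CFC.sqrt_mul_sqrt_self A hA.nonneg]
  have hherm : ((CFC.sqrt A).map Complex.ofReal)ᴴ = (CFC.sqrt A).map Complex.ofReal := by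
    rw [← Matrix.conjTranspose_map _ ofReal_semiconj, (CFC.sqrt_nonneg A).posSemidef.isHermitian]
  have := Matrix.posSemidef_conjTranspose_mul_self ((CFC.sqrt A).map Complex.ofReal)
  rwa [hherm, hsq] at this

theorem damper_channel_positive_real
    (n k : ℕ)
    (M K D : Matrix (Fin n) (Fin n) ℝ)
    (hM : M.PosDef) (hK : K.PosDef) (hD : D.PosSemidef)
    (U₂ : Matrix (Fin n) (Fin k) ℝ)
    (s : ℂ) (hs : 0 ≤ s.re) (hs0 : s ≠ 0)
    (Mc Kc Dc : Matrix (Fin n) (Fin n) ℂ)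
    (hMc : Mc = M.map Complex.ofReal) (hKc : Kc = K.map Complex.ofReal)
    (hDc : Dc = D.map Complex.ofReal)
    (U₂c : Matrix (Fin n) (Fin k) ℂ) (hU₂c : U₂c = U₂.map Complex.ofReal)
    (hinv : IsUnit (s ^ 2 • Mc + s • Dc + Kc))
    (H₃ : Matrix (Fin k) (Fin k) ℂ)
    (hH₃ : H₃ = s • (U₂cᵀ * (s ^ 2 • Mc + s • Dc + Kc)⁻¹ * U₂c)) :
    (H₃ + H₃ᴴ).PosSemidef := by
  have hMps : Mc.PosSemidef := hMc ▸ psd_map_ofReal hM.posSemidef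
  have hKps : Kc.PosSemidef := hKc ▸ psd_map_ofReal hK.posSemidef
  have hDps : Dc.PosSemidef := hDc ▸ psd_map_ofReal hD
  set A : Matrix (Fin n) (Fin n) ℂ := s ^ 2 • Mc + s • Dc + Kc with hA
  have hdet : IsUnit A.det := (Matrix.isUnit_iff_isUnit_det A).mp hinv
  have hU₂herm : U₂cᴴ = U₂cᵀ := by
    subst hU₂c
    ext i j
    simp [Matrix.conjTranspose_apply, Complex.conj_ofReal]
  refine Matrix.PosSemidef.of_dotProduct_mulVec_nonneg ?_ ?_
  · exact Matrix.isHermitian_add_transpose_self H₃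
  · intro x
    set y : Fin n → ℂ := A⁻¹ *ᵥ (U₂c *ᵥ x) with hy
    have hAy : A *ᵥ y = U₂c *ᵥ x := by
      rw [hy, Matrix.mulVec_mulVec, Matrix.mul_nonsing_inv _ hdet, Matrix.one_mulVec]
    have hAH : Aᴴ = (star s) ^ 2 • Mc + star s • Dc + Kc := by
      rw [hA]
      simp only [Matrix.conjTranspose_add, Matrix.conjTranspose_smul,
        hMps.isHermitian.eq, hDps.isHermitian.eq, hKps.isHermitian.eq, star_pow]
    obtain ⟨mr, hmr0, hmr⟩ : ∃ r : ℝ, 0 ≤ r ∧ star y ⬝ᵥ (Mc *ᵥ y) = (r : ℂ) := by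
      obtain ⟨h1, h2⟩ := Complex.nonneg_iff.mp (hMps.dotProduct_mulVec_nonneg y)
      exact ⟨_, h1, by apply Complex.ext <;> simp [h2.symm]⟩
    obtain ⟨dr, hdr0, hdr⟩ : ∃ r : ℝ, 0 ≤ r ∧ star y ⬝ᵥ (Dc *ᵥ y) = (r : ℂ) := by
      obtain ⟨h1, h2⟩ := Complex.nonneg_iff.mp (hDps.dotProduct_mulVec_nonneg y)
      exact ⟨_, h1, by apply Complex.ext <;> simp [h2.symm]⟩
    obtain ⟨kr, hkr0, hkr⟩ : ∃ r : ℝ, 0 ≤ r ∧ star y ⬝ᵥ (Kc *ᵥ y) = (r : ℂ) := by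
      obtain ⟨h1, h2⟩ := Complex.nonneg_iff.mp (hKps.dotProduct_mulVec_nonneg y)
      exact ⟨_, h1, by apply Complex.ext <;> simp [h2.symm]⟩
    have hq1 : star x ⬝ᵥ (H₃ *ᵥ x)
        = s * ((star s) ^ 2 * (mr : ℂ) + star s * (dr : ℂ) + (kr : ℂ)) := by
      rw [hH₃, Matrix.smul_mulVec, dotProduct_smul]
      congr 1
      have h1 : star x ⬝ᵥ ((U₂cᵀ * A⁻¹ * U₂c) *ᵥ x) = star x ⬝ᵥ (U₂cᵀ *ᵥ y) := by
        rw [hy, Matrix.mulVec_mulVec, Matrix.mulVec_mulVec]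
      rw [h1, ← hU₂herm, Matrix.dotProduct_mulVec, ← Matrix.star_mulVec, ← hAy,
        Matrix.star_mulVec, ← Matrix.dotProduct_mulVec, hAH]
      simp only [Matrix.add_mulVec, Matrix.smul_mulVec, dotProduct_add,
        dotProduct_smul, smul_eq_mul, hmr, hdr, hkr]
    have hq2 : star x ⬝ᵥ (H₃ᴴ *ᵥ x) = star (star x ⬝ᵥ (H₃ *ᵥ x)) := by
      rw [Matrix.star_dotProduct]
      congr 1
      rw [Matrix.star_mulVec, Matrix.conjTranspose_conjTranspose, ← Matrix.dotProduct_mulVec]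
    rw [Matrix.add_mulVec, dotProduct_add, hq2, RCLike.star_def, Complex.add_conj]
    rw [Complex.zero_le_real]
    have hre : (star x ⬝ᵥ (H₃ *ᵥ x)).re
        = s.re * (s.re ^ 2 + s.im ^ 2) * mr + (s.re ^ 2 + s.im ^ 2) * dr + s.re * kr := by
      rw [hq1]
      simp only [RCLike.star_def, pow_two, Complex.mul_re, Complex.mul_im, Complex.add_re,
        Complex.add_im, Complex.conj_re, Complex.conj_im, Complex.ofReal_re, Complex.ofReal_im]
      ring
    rw [hre]
    have h1 : 0 ≤ s.re ^ 2 + s.im ^ 2 := by positivity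
    nlinarith [mul_nonneg (mul_nonneg hs h1) hmr0, mul_nonneg h1 hdr0, mul_nonneg hs hkr0]
end
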